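/- arXiv:2602.08704 — 2 statements merged into one kernel-verified Lean document; each statement's English description precedes it below -/
import Mathlib

section
/- Fix k ∈ Ω and for u ∈ ℝ let S(u) be the diagonal matrix obtained from S_Ω by replacing its k-th diagonal entry with u, and define v(u) := (I_Ω − S(u) W_ΩΩ)^{-1} (S(u) W_Ω∂ ψ + (I_Ω − S(u)) φ) wherever I_Ω − S(u) W_ΩΩ is invertible. If I_Ω − S_Ω W_ΩΩ is invertible, then u ↦ v(u) is differentiable at u = s_k with derivative v'(s_k) = G_S E_k (W_ΩΩ v_Ω^* + W_Ω∂ ψ − φ) = ((W_ΩΩ v_Ω^* + W_Ω∂ ψ − φ)_k) · G_S e_k, where G_S = (I_Ω − S_Ω W_ΩΩ)^{-1}, v_Ω^* = v(s_k), E_k = e_k e_k^T, and e_k is the k-th standard basis vector of ℝ^Ω. -/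
open Matrix

attribute [local instance] Matrix.linftyOpNormedRing Matrix.linftyOpNormedAlgebra

/-- `mulVec` as a continuous linear map in the matrix argument. -/
noncomputable def mulVecCLM (Ω : Type*) [Fintype Ω] [DecidableEq Ω] :
    Matrix Ω Ω ℝ →L[ℝ] ((Ω → ℝ) →L[ℝ] (Ω → ℝ)) :=
  LinearMap.toContinuousLinearMap
    ((LinearMap.toContinuousLinearMap :
        ((Ω → ℝ) →ₗ[ℝ] (Ω → ℝ)) ≃ₗ[ℝ] ((Ω → ℝ) →L[ℝ] (Ω → ℝ))).toLinearMap ∘ₗ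
      Matrix.toLin'.toLinearMap)

lemma mulVecCLM_apply {Ω : Type*} [Fintype Ω] [DecidableEq Ω]
    (M : Matrix Ω Ω ℝ) (w : Ω → ℝ) : mulVecCLM Ω M w = M.mulVec w := by
  simp [mulVecCLM]

/-- **Sensitivity of the steady state to a susceptibility parameter.**  With
`S(u)` the susceptibility matrix whose `k`-th diagonal entry is replaced by `u` and
`v(u) = (I − S(u) W_ΩΩ)⁻¹ (S(u) W_Ω∂ ψ + (I − S(u)) φ)`, if `I − S_Ω W_ΩΩ` is
invertible then `u ↦ v(u)` is differentiable at `u = s_k` with derivative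
`G_S E_k (W_ΩΩ v_Ω^* + W_Ω∂ ψ − φ) = ((W_ΩΩ v_Ω^* + W_Ω∂ ψ − φ)_k) • G_S e_k`. -/
theorem steady_state_sensitivity
    {Ω B : Type*} [Fintype Ω] [Fintype B] [DecidableEq Ω] [DecidableEq B]
    [Nonempty Ω] [Nonempty B]
    (Wii : Matrix Ω Ω ℝ) (Wib : Matrix Ω B ℝ)
    (s : Ω → ℝ) (hs : ∀ i, s i ∈ Set.Icc (0 : ℝ) 1)
    (φ : Ω → ℝ) (ψ : B → ℝ) (k : Ω)
    (S : ℝ → Matrix Ω Ω ℝ)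
    (hS : ∀ u : ℝ, S u = Matrix.diagonal (Function.update s k u))
    (v : ℝ → Ω → ℝ)
    (hv : ∀ u : ℝ, v u = ((1 : Matrix Ω Ω ℝ) - S u * Wii)⁻¹.mulVec
        ((S u * Wib).mulVec ψ + ((1 : Matrix Ω Ω ℝ) - S u).mulVec φ))
    (hinv : IsUnit ((1 : Matrix Ω Ω ℝ) - Matrix.diagonal s * Wii))
    (GS : Matrix Ω Ω ℝ)
    (hGS : GS = ((1 : Matrix Ω Ω ℝ) - Matrix.diagonal s * Wii)⁻¹)
    (vstar : Ω → ℝ) (hvstar : vstar = v (s k)) :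
    HasDerivAt v
      (GS.mulVec ((Matrix.single k k (1 : ℝ)).mulVec
        (Wii.mulVec vstar + Wib.mulVec ψ - φ))) (s k)
    ∧ GS.mulVec ((Matrix.single k k (1 : ℝ)).mulVec
          (Wii.mulVec vstar + Wib.mulVec ψ - φ))
        = (Wii.mulVec vstar + Wib.mulVec ψ - φ) k • GS.mulVec (Pi.single k 1) := by
  classical
  set c := s k with hc
  set E : Matrix Ω Ω ℝ := Matrix.single k k 1 with hE
  set A₀ : Matrix Ω Ω ℝ := (1 : Matrix Ω Ω ℝ) - Matrix.diagonal s * Wii with hA₀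
  -- decomposition of S u
  have hSdec : ∀ u : ℝ, S u = Matrix.diagonal s + (u - c) • E := by
    intro u
    rw [hS]
    ext i j
    by_cases hij : i = j
    · subst hij
      by_cases hik : i = k
      · subst hik
        simp only [hE, Matrix.add_apply, Matrix.smul_apply, Matrix.diagonal_apply_eq,
          Function.update_self, Matrix.single_apply_same, smul_eq_mul, mul_one]
        rw [hc]
        ring
      · simp [hE, Matrix.single, Function.update_of_ne hik, (Ne.symm hik : k ≠ i)]
    · simp only [hE, Matrix.add_apply, Matrix.smul_apply, Matrix.diagonal_apply_ne _ hij,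
        smul_eq_mul]
      rw [Matrix.single_apply_of_ne, mul_zero, add_zero]
      rintro ⟨h1, h2⟩
      exact hij (h1.symm.trans h2)
  have hSc : S c = Matrix.diagonal s := by
    rw [hSdec c]; simp
  -- A u
  have hAdec : ∀ u : ℝ, (1 : Matrix Ω Ω ℝ) - S u * Wii = A₀ + (u - c) • (-(E * Wii)) := by
    intro u
    rw [hSdec u, hA₀]
    rw [add_mul, smul_mul_assoc, smul_neg]
    abel
  have hA : HasDerivAt (fun u : ℝ => (1 : Matrix Ω Ω ℝ) - S u * Wii) (-(E * Wii)) c := by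
    have h1 : HasDerivAt (fun u : ℝ => A₀ + (u - c) • (-(E * Wii))) (-(E * Wii)) c := by
      have hh := (((hasDerivAt_id c).sub_const c).smul_const (-(E * Wii))).const_add A₀
      simp only [id_eq, one_smul] at hh
      exact hh
    exact h1.congr_of_eventuallyEq (Filter.Eventually.of_forall fun u => hAdec u)
  -- b u
  set b : ℝ → Ω → ℝ := fun u => (S u * Wib).mulVec ψ + ((1 : Matrix Ω Ω ℝ) - S u).mulVec φ
    with hbdef
  set b₀ : Ω → ℝ := (Matrix.diagonal s * Wib).mulVec ψ
      + ((1 : Matrix Ω Ω ℝ) - Matrix.diagonal s).mulVec φ with hb₀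
  set w : Ω → ℝ := (E * Wib).mulVec ψ - E.mulVec φ with hw
  have hbdec : ∀ u : ℝ, b u = b₀ + (u - c) • w := by
    intro u
    show (S u * Wib).mulVec ψ + ((1 : Matrix Ω Ω ℝ) - S u).mulVec φ = _
    rw [hSdec u, hb₀, hw]
    rw [Matrix.add_mul, sub_add_eq_sub_sub, Matrix.add_mulVec, Matrix.sub_mulVec,
      Matrix.smul_mul, Matrix.smul_mulVec, Matrix.smul_mulVec, smul_sub]
    abel
  have hb : HasDerivAt b w c := by
    have h1 : HasDerivAt (fun u : ℝ => b₀ + (u - c) • w) w c := by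
      simpa using (((hasDerivAt_id c).sub_const c).smul_const w).const_add b₀
    exact h1.congr_of_eventuallyEq (Filter.Eventually.of_forall fun u => hbdec u)
  -- inverse function
  have hGSunit : (↑hinv.unit⁻¹ : Matrix Ω Ω ℝ) = GS := by
    have h := Ring.inverse_unit hinv.unit
    rw [hinv.unit_spec] at h
    rw [hGS, Matrix.nonsing_inv_eq_ringInverse, ← h]
  have hFinv : HasFDerivAt Ring.inverse
      (-(ContinuousLinearMap.mulLeftRight ℝ (Matrix Ω Ω ℝ) GS GS)) A₀ := by
    have := hasFDerivAt_ringInverse (𝕜 := ℝ) hinv.unit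
    rwa [hinv.unit_spec, hGSunit] at this
  have hAc : (1 : Matrix Ω Ω ℝ) - S c * Wii = A₀ := by rw [hSc, hA₀]
  have hFd : HasDerivAt (fun u : ℝ => Ring.inverse ((1 : Matrix Ω Ω ℝ) - S u * Wii))
      (GS * (E * Wii) * GS) c := by
    have hFinv2 := hFinv
    rw [← hAc] at hFinv2
    have h2 := HasFDerivAt.comp_hasDerivAt c hFinv2 hA
    simp [Function.comp_def, ContinuousLinearMap.neg_apply,
      ContinuousLinearMap.mulLeftRight_apply, mul_assoc] at h2
    simp only [mul_assoc]
    exact h2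
  -- v as mulVecCLM
  have hveq : v = fun u => mulVecCLM Ω (Ring.inverse ((1 : Matrix Ω Ω ℝ) - S u * Wii)) (b u) := by
    funext u
    rw [hv u, mulVecCLM_apply, Matrix.nonsing_inv_eq_ringInverse]
  have hFc : Ring.inverse ((1 : Matrix Ω Ω ℝ) - S c * Wii) = GS := by
    rw [hAc, hGS, Matrix.nonsing_inv_eq_ringInverse]
  have hTF : HasDerivAt (fun u => mulVecCLM Ω (Ring.inverse ((1 : Matrix Ω Ω ℝ) - S u * Wii)))
      (mulVecCLM Ω (GS * (E * Wii) * GS)) c :=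
    (mulVecCLM Ω).hasFDerivAt.comp_hasDerivAt c hFd
  have h4 := hTF.clm_apply hb
  rw [hFc] at h4
  rw [mulVecCLM_apply, mulVecCLM_apply] at h4
  -- value of b c and vstar
  have hbc : b c = b₀ := by rw [hbdec c]; simp
  have hvstar' : vstar = GS.mulVec b₀ := by
    rw [hvstar, hv c, hAc, hSc, hGS, hb₀]
  -- the derivative equals the target
  have hder : (GS * (E * Wii) * GS).mulVec (b c) + GS.mulVec w
      = GS.mulVec (E.mulVec (Wii.mulVec vstar + Wib.mulVec ψ - φ)) := by
    rw [hbc, hw, hvstar']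
    simp only [Matrix.mulVec_add, Matrix.mulVec_sub, Matrix.mulVec_mulVec, ← mul_assoc]
    abel
  constructor
  · rw [← hder, hveq]
    exact h4
  · have hEx : ∀ y : Ω → ℝ, E.mulVec y = y k • (Pi.single k (1 : ℝ) : Ω → ℝ) := by
      intro y
      ext i
      simp only [hE, Matrix.mulVec, dotProduct, Matrix.single, Matrix.of_apply,
        ite_and, Pi.smul_apply, Pi.single_apply, smul_eq_mul, boole_mul, ite_mul, zero_mul]
      rcases eq_or_ne i k with rfl | hik
      · simp
      · simp [hik, Ne.symm hik]
    rw [hEx, Matrix.mulVec_smul]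
end

section
/- Let W be row-stochastic with nonnegative entries, and let S_Ω = diag(s_i) and S_Ω' = diag(s_i') with 0 ≤ s_i ≤ s_i' ≤ 1 for all i ∈ Ω. Assume ρ(S_Ω' W_ΩΩ) < 1 (hence also ρ(S_Ω W_ΩΩ) < 1). Then the influence matrices U := (I_Ω − S_Ω W_ΩΩ)^{-1} S_Ω W_Ω∂ and U' := (I_Ω − S_Ω' W_ΩΩ)^{-1} S_Ω' W_Ω∂ satisfy U_{jk} ≤ U'_{jk} for all j ∈ Ω, k ∈ ∂Ω. -/
open Matrix Filter

set_option linter.unusedSectionVars false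

/-- Spectral radius of a real matrix: max modulus of its complex eigenvalues. -/
noncomputable def specRad {m : Type*} [Fintype m] [DecidableEq m] (A : Matrix m m ℝ) : ℝ :=
  (spectralRadius ℂ (A.map (algebraMap ℝ ℂ))).toReal

section Aux

attribute [local instance] Matrix.linftyOpNormedRing Matrix.linftyOpNormedAlgebra
  Matrix.linftyOpNormedSpace

variable {Ω : Type*} [Fintype Ω] [DecidableEq Ω] [Nonempty Ω]

noncomputable local instance : CompleteSpace (Matrix Ω Ω ℂ) := FiniteDimensional.complete ℂ _
noncomputable local instance : CompleteSpace (Matrix Ω Ω ℝ) := FiniteDimensional.complete ℝ _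

/-- entrywise bound by the linfty operator norm -/
lemma entry_nnnorm_le (A : Matrix Ω Ω ℝ) (i j : Ω) : ‖A i j‖₊ ≤ ‖A‖₊ := by
  rw [Matrix.linfty_opNNNorm_def]
  calc ‖A i j‖₊ ≤ ∑ l, ‖A i l‖₊ :=
        Finset.single_le_sum (f := fun l => ‖A i l‖₊) (fun l _ => zero_le) (Finset.mem_univ j)
    _ ≤ _ := Finset.le_sup (f := fun i => ∑ l, ‖A i l‖₊) (Finset.mem_univ i)

/-- the entry map as an additive monoid hom -/
def entryHom (i j : Ω) : Matrix Ω Ω ℝ →+ ℝ where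
  toFun M := M i j
  map_zero' := rfl
  map_add' _ _ := rfl

lemma entryHom_continuous (i j : Ω) : Continuous (entryHom (Ω := Ω) i j) := by
  refine AddMonoidHomClass.continuous_of_bound (entryHom i j) 1 fun M => ?_
  show ‖M i j‖ ≤ 1 * ‖M‖
  rw [one_mul]
  exact_mod_cast (entry_nnnorm_le M i j : ‖M i j‖₊ ≤ ‖M‖₊)

lemma nnnorm_mono {A A' : Matrix Ω Ω ℝ}
    (h0 : ∀ i j, 0 ≤ A i j) (h : ∀ i j, A i j ≤ A' i j) : ‖A‖₊ ≤ ‖A'‖₊ := by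
  rw [Matrix.linfty_opNNNorm_def, Matrix.linfty_opNNNorm_def]
  refine Finset.sup_mono_fun fun i _ => Finset.sum_le_sum fun l _ => ?_
  have : |A i l| ≤ |A' i l| := by
    rw [abs_of_nonneg (h0 i l), abs_of_nonneg ((h0 i l).trans (h i l))]
    exact h i l
  simpa [← NNReal.coe_le_coe, Real.norm_eq_abs] using this

lemma nnnorm_map_complex (A : Matrix Ω Ω ℝ) :
    ‖A.map (algebraMap ℝ ℂ)‖₊ = ‖A‖₊ := by
  rw [Matrix.linfty_opNNNorm_def, Matrix.linfty_opNNNorm_def]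
  congr 1; funext i; congr 1; funext j
  simp [Matrix.map_apply]


lemma pow_entry_mono {A A' : Matrix Ω Ω ℝ}
    (h0 : ∀ i j, 0 ≤ A i j) (h : ∀ i j, A i j ≤ A' i j) :
    ∀ n, ∀ i j, 0 ≤ (A ^ n) i j ∧ (A ^ n) i j ≤ (A' ^ n) i j := by
  intro n
  induction n with
  | zero => intro i j; simp [Matrix.one_apply]; split <;> simp
  | succ n ih =>
    intro i j
    rw [pow_succ, pow_succ, Matrix.mul_apply, Matrix.mul_apply]
    constructor
    · exact Finset.sum_nonneg fun l _ => mul_nonneg (ih i l).1 (h0 l j)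
    · refine Finset.sum_le_sum fun l _ => mul_le_mul (ih i l).2 (h l j) (h0 l j)
        ((ih i l).1.trans (ih i l).2)

/-- key summability/convergence facts from the spectral radius hypothesis -/
lemma summable_pow_of_specRad_lt_one {A' : Matrix Ω Ω ℝ}
    (hρ : (spectralRadius ℂ (A'.map (algebraMap ℝ ℂ))).toReal < 1) :
    Summable (fun n : ℕ => ‖A' ^ n‖) := by
  set Ac := A'.map (algebraMap ℝ ℂ) with hAc
  have hfin : spectralRadius ℂ Ac ≠ ⊤ :=
    ((spectrum.spectralRadius_le_nnnorm (𝕜 := ℂ) Ac).trans_lt ENNReal.coe_lt_top).ne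
  have hlt : spectralRadius ℂ Ac < 1 := by
    rw [← ENNReal.toReal_lt_toReal hfin ENNReal.one_ne_top]
    simpa using hρ
  obtain ⟨e, he1, he2⟩ := exists_between hlt
  have heT : e ≠ ⊤ := (he2.trans ENNReal.one_lt_top).ne
  set r : NNReal := e.toNNReal with hr
  have hre : (r : ENNReal) = e := ENNReal.coe_toNNReal heT
  have hr1 : (r : ℝ) < 1 := by
    have := he2; rw [← hre] at this
    exact_mod_cast this
  have htend := spectrum.pow_nnnorm_pow_one_div_tendsto_nhds_spectralRadius Ac
  have hev : ∀ᶠ n : ℕ in atTop, (‖Ac ^ n‖₊ : ENNReal) ^ (1 / (n : ℝ)) < e :=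
    htend.eventually_lt_const he1
  obtain ⟨N, hN⟩ := (hev.and (eventually_ge_atTop 1)).exists_forall_of_atTop
  have hmapow : ∀ n : ℕ, Ac ^ n = (A' ^ n).map (algebraMap ℝ ℂ) := by
    intro n
    have := map_pow ((algebraMap ℝ ℂ).mapMatrix (m := Ω)) A' n
    simpa [RingHom.mapMatrix_apply, hAc] using this.symm
  have hbound : ∀ n, N ≤ n → ‖A' ^ n‖₊ ≤ r ^ n := by
    intro n hn
    obtain ⟨h1, h2⟩ := hN n hn
    have hne : (1 / (n : ℝ)) * (n : ℝ) = 1 := by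
      rw [one_div_mul_cancel]
      exact_mod_cast Nat.one_le_iff_ne_zero.mp h2
    have h3 : ((‖Ac ^ n‖₊ : ENNReal) ^ (1 / (n : ℝ))) ^ (n : ℝ) ≤ e ^ (n : ℝ) :=
      ENNReal.rpow_le_rpow h1.le (by positivity)
    rw [← ENNReal.rpow_mul, hne, ENNReal.rpow_one, ← hre] at h3
    have h4 : (‖Ac ^ n‖₊ : ENNReal) ≤ ((r ^ n : NNReal) : ENNReal) := by
      rw [ENNReal.coe_pow, ← ENNReal.rpow_natCast]; exact h3
    rw [ENNReal.coe_le_coe] at h4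
    calc ‖A' ^ n‖₊ = ‖Ac ^ n‖₊ := by rw [hmapow]; exact (nnnorm_map_complex _).symm
      _ ≤ r ^ n := h4
  have hr0 : (0 : ℝ) ≤ r := r.coe_nonneg
  have hgeom : Summable (fun n : ℕ => (r : ℝ) ^ n) := summable_geometric_of_lt_one hr0 hr1
  have hshift : Summable (fun n : ℕ => ‖A' ^ (n + N)‖) := by
    refine Summable.of_nonneg_of_le (fun n => norm_nonneg _) (fun n => ?_)
      (hgeom.mul_right ((r : ℝ) ^ N))
    have h := hbound (n + N) (Nat.le_add_left _ _)
    calc ‖A' ^ (n + N)‖ = (‖A' ^ (n + N)‖₊ : ℝ) := rfl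
      _ ≤ ((r ^ (n + N) : NNReal) : ℝ) := by exact_mod_cast h
      _ = (r : ℝ) ^ n * (r : ℝ) ^ N := by push_cast [pow_add]; ring
  exact (summable_nat_add_iff N).mp hshift

lemma inv_one_sub_eq_tsum {A : Matrix Ω Ω ℝ} (hs : Summable (fun n : ℕ => ‖A ^ n‖)) :
    (1 - A)⁻¹ = ∑' n : ℕ, A ^ n := by
  have hS : Summable (fun n : ℕ => A ^ n) := Summable.of_norm hs
  have hS1 : Summable (fun n : ℕ => A ^ (n + 1)) := (summable_nat_add_iff 1).mpr hS
  have htel : HasSum (fun n : ℕ => A ^ n - A ^ (n + 1)) 1 := by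
    rw [Summable.hasSum_iff_tendsto_nat (hS.sub hS1)]
    have heq : ∀ n : ℕ, ∑ i ∈ Finset.range n, (A ^ i - A ^ (i + 1)) = 1 - A ^ n := by
      intro n
      rw [Finset.sum_range_sub' (fun i => A ^ i)]
      simp
    simp only [heq]
    have h0 : Filter.Tendsto (fun n : ℕ => A ^ n) Filter.atTop (nhds 0) :=
      hS.tendsto_atTop_zero
    simpa using tendsto_const_nhds.sub h0
  have hmul : HasSum (fun n : ℕ => A ^ n * (1 - A)) ((∑' n : ℕ, A ^ n) * (1 - A)) :=
    hS.hasSum.mul_right _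
  have heq2 : (fun n : ℕ => A ^ n * (1 - A)) = fun n : ℕ => A ^ n - A ^ (n + 1) := by
    funext n; rw [mul_sub, mul_one, ← pow_succ]
  rw [heq2] at hmul
  exact Matrix.inv_eq_left_inv (hmul.unique htel)

lemma inv_entry_nonneg_mono {A A' : Matrix Ω Ω ℝ}
    (h0 : ∀ i j, 0 ≤ A i j) (h : ∀ i j, A i j ≤ A' i j)
    (hρ : (spectralRadius ℂ (A'.map (algebraMap ℝ ℂ))).toReal < 1) :
    ∀ i j, 0 ≤ (1 - A)⁻¹ i j ∧ (1 - A)⁻¹ i j ≤ (1 - A')⁻¹ i j := by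
  have hpow := pow_entry_mono h0 h
  have hs' : Summable (fun n : ℕ => ‖A' ^ n‖) := summable_pow_of_specRad_lt_one hρ
  have hnle : ∀ n : ℕ, ‖A ^ n‖ ≤ ‖A' ^ n‖ := fun n => by
    have := nnnorm_mono (fun i j => (hpow n i j).1) (fun i j => (hpow n i j).2)
    exact_mod_cast this
  have hs : Summable (fun n : ℕ => ‖A ^ n‖) :=
    Summable.of_nonneg_of_le (fun n => norm_nonneg _) hnle hs'
  intro i j
  have he : HasSum (fun n : ℕ => (A ^ n) i j) ((∑' n : ℕ, A ^ n) i j) :=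
    (Summable.of_norm hs).hasSum.map (entryHom i j) (entryHom_continuous i j)
  have he' : HasSum (fun n : ℕ => (A' ^ n) i j) ((∑' n : ℕ, A' ^ n) i j) :=
    (Summable.of_norm hs').hasSum.map (entryHom i j) (entryHom_continuous i j)
  rw [inv_one_sub_eq_tsum hs, inv_one_sub_eq_tsum hs']
  exact ⟨hasSum_le (fun n => (hpow n i j).1) hasSum_zero he,
    hasSum_le (fun n => (hpow n i j).2) he he'⟩

end Aux

/-- **Monotonicity of the influence matrix in susceptibility.**  For row-stochastic
`W` and susceptibility profiles `0 ≤ s ≤ s' ≤ 1` with `ρ(S_Ω' W_ΩΩ) < 1`, the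
influence matrices `U = (I − S_Ω W_ΩΩ)⁻¹ S_Ω W_Ω∂` and
`U' = (I − S_Ω' W_ΩΩ)⁻¹ S_Ω' W_Ω∂` satisfy `U_{jk} ≤ U'_{jk}` entrywise. -/
theorem influence_matrix_monotone
    {Ω B : Type*} [Fintype Ω] [Fintype B] [DecidableEq Ω] [DecidableEq B]
    [Nonempty Ω] [Nonempty B]
    (W : Matrix (Ω ⊕ B) (Ω ⊕ B) ℝ)
    (hW0 : ∀ i j, 0 ≤ W i j) (hW1 : ∀ i, ∑ j, W i j = 1)
    (s s' : Ω → ℝ)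
    (hs0 : ∀ i, 0 ≤ s i) (hss' : ∀ i, s i ≤ s' i) (hs'1 : ∀ i, s' i ≤ 1)
    (hρ' : specRad (Matrix.diagonal s' * W.toBlocks₁₁) < 1)
    (U U' : Matrix Ω B ℝ)
    (hU : U = ((1 : Matrix Ω Ω ℝ) - Matrix.diagonal s * W.toBlocks₁₁)⁻¹
        * (Matrix.diagonal s * W.toBlocks₁₂))
    (hU' : U' = ((1 : Matrix Ω Ω ℝ) - Matrix.diagonal s' * W.toBlocks₁₁)⁻¹
        * (Matrix.diagonal s' * W.toBlocks₁₂)) :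
    ∀ (j : Ω) (k : B), U j k ≤ U' j k := by
  set A := Matrix.diagonal s * W.toBlocks₁₁ with hA
  set A' := Matrix.diagonal s' * W.toBlocks₁₁ with hA'
  have hAentry : ∀ i j, A i j = s i * W (Sum.inl i) (Sum.inl j) := by
    intro i j; rw [hA, Matrix.diagonal_mul]; rfl
  have hA'entry : ∀ i j, A' i j = s' i * W (Sum.inl i) (Sum.inl j) := by
    intro i j; rw [hA', Matrix.diagonal_mul]; rfl
  have h0 : ∀ i j, 0 ≤ A i j := fun i j => by
    rw [hAentry]; exact mul_nonneg (hs0 i) (hW0 _ _)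
  have hle : ∀ i j, A i j ≤ A' i j := fun i j => by
    rw [hAentry, hA'entry]
    exact mul_le_mul_of_nonneg_right (hss' i) (hW0 _ _)
  have hinv := inv_entry_nonneg_mono h0 hle (by simpa [specRad] using hρ')
  intro j k
  rw [hU, hU', Matrix.mul_apply, Matrix.mul_apply]
  refine Finset.sum_le_sum fun i _ => ?_
  have hM : (Matrix.diagonal s * W.toBlocks₁₂) i k = s i * W (Sum.inl i) (Sum.inr k) := by
    rw [Matrix.diagonal_mul]; rfl
  have hM' : (Matrix.diagonal s' * W.toBlocks₁₂) i k = s' i * W (Sum.inl i) (Sum.inr k) := by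
    rw [Matrix.diagonal_mul]; rfl
  rw [hM, hM']
  exact mul_le_mul ((hinv j i).2)
    (mul_le_mul_of_nonneg_right (hss' i) (hW0 _ _))
    (mul_nonneg (hs0 i) (hW0 _ _)) ((hinv j i).1.trans (hinv j i).2)
end
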